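/- For a simple graph G with edge vw, the two orderings of edge local complementation agree: LC at v then w then v yields the same graph as LC at w then v then w. -/

import Mathlib

set_option maxHeartbeats 4000000

/-- Local complementation of a simple graph `G` at vertex `v`: complement all
edges among the neighbours of `v`, leaving all other adjacencies unchanged. -/
def localComp {V : Type*} (G : SimpleGraph V) (v : V) : SimpleGraph V where
  Adj a b := a ≠ b ∧ (G.Adj a b ↔ ¬(G.Adj v a ∧ G.Adj v b))
  symm := by
    refine ⟨?_⟩
    intro a b ⟨hne, h⟩
    exact ⟨hne.symm, by rw [G.adj_comm b a, and_comm]; exact h⟩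
  loopless := ⟨fun a h => h.1 rfl⟩

/-- the two orderings of edge local complementation agree:
for an edge `vw`, LC at `v` then `w` then `v` equals LC at `w` then `v` then `w`. -/
theorem edgeLocalComp_comm {V : Type*} (G : SimpleGraph V) (v w : V)
    (h : G.Adj v w) :
    localComp (localComp (localComp G v) w) v =
      localComp (localComp (localComp G w) v) w := by
  have hwv : G.Adj w v := h.symm
  have hne : v ≠ w := h.ne
  have hne' : w ≠ v := h.ne'
  ext a b
  simp only [localComp, ne_eq, SimpleGraph.adj_comm G a v, SimpleGraph.adj_comm G b v,
    SimpleGraph.adj_comm G a w, SimpleGraph.adj_comm G b w, SimpleGraph.adj_comm G w v,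
    SimpleGraph.adj_comm G b a, SimpleGraph.irrefl, h, hwv, hne, hne',
    not_false_eq_true, true_and, false_and, and_true, and_false, not_not,
    iff_true, iff_false, true_iff, false_iff, not_true, not_false_iff]
  by_cases hab : a = b
  · simp [hab]
  by_cases hav : v = a <;> by_cases hbv : v = b <;> by_cases haw : w = a <;>
    by_cases hbw : w = b <;>
  by_cases hA : G.Adj a b <;> by_cases hP : G.Adj v a <;> by_cases hQ : G.Adj v b <;>
    by_cases hR : G.Adj w a <;> by_cases hS : G.Adj w b <;>
  simp_all
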